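/- Let n > 1 and let q ∈ ℂ be a primitive n-th root of unity. Let ℂ_q[u,v] be the quotient of the free ℂ-algebra on u, v by the two-sided ideal generated by uv − qvu. Then the center of ℂ_q[u,v] equals the ℂ-subalgebra generated by the images of u^n and v^n. -/

import Mathlib

/-- The generators of the free algebra on two variables. -/
noncomputable def freeGen2 (i : Fin 2) : FreeAlgebra ℂ (Fin 2) := FreeAlgebra.ι ℂ i

/-- The defining relation of the quantum plane `ℂ_q[u,v]`: `uv = q vu`. -/
inductive PlaneRel (q : ℂ) : FreeAlgebra ℂ (Fin 2) → FreeAlgebra ℂ (Fin 2) → Prop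
  | uv : PlaneRel q (freeGen2 0 * freeGen2 1) (q • (freeGen2 1 * freeGen2 0))

/-- The quantum plane `ℂ_q[u,v]`. -/
noncomputable abbrev QuantumPlane (q : ℂ) := RingQuot (PlaneRel q)

/-- The image of `u` in `ℂ_q[u,v]`. -/
noncomputable def qU (q : ℂ) : QuantumPlane q := RingQuot.mkAlgHom ℂ (PlaneRel q) (freeGen2 0)

/-- The image of `v` in `ℂ_q[u,v]`. -/
noncomputable def qV (q : ℂ) : QuantumPlane q := RingQuot.mkAlgHom ℂ (PlaneRel q) (freeGen2 1)

section Lemmas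
variable (q : ℂ)

lemma rel_UV : qU q * qV q = q • (qV q * qU q) := by
  have h := RingQuot.mkAlgHom_rel ℂ (PlaneRel.uv (q := q))
  simpa [qU, qV, map_mul, map_smul] using h

lemma Upow_V (a : ℕ) : qU q ^ a * qV q = q ^ a • (qV q * qU q ^ a) := by
  induction a with
  | zero => simp
  | succ a ih =>
    rw [pow_succ, mul_assoc, rel_UV, mul_smul_comm, ← mul_assoc, ih,
      smul_mul_assoc, smul_smul, pow_succ, mul_assoc]
    ring_nf

lemma U_Vpow (b : ℕ) : qU q * qV q ^ b = q ^ b • (qV q ^ b * qU q) := by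
  induction b with
  | zero => simp
  | succ b ih =>
    rw [pow_succ, ← mul_assoc, ih, smul_mul_assoc, mul_assoc, rel_UV, mul_smul_comm,
      smul_smul, ← mul_assoc, ← pow_succ]

variable (hq0 : q ≠ 0)
include hq0

lemma V_Upow (a : ℕ) : qV q * qU q ^ a = (q⁻¹) ^ a • (qU q ^ a * qV q) := by
  rw [Upow_V, smul_smul, inv_pow, inv_mul_cancel₀ (pow_ne_zero _ hq0), one_smul]

lemma Vpow_U (b : ℕ) : qV q ^ b * qU q = (q⁻¹) ^ b • (qU q * qV q ^ b) := by
  rw [U_Vpow, smul_smul, inv_pow, inv_mul_cancel₀ (pow_ne_zero _ hq0), one_smul]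

lemma Vpow_Upow (b c : ℕ) : qV q ^ b * qU q ^ c = (q⁻¹) ^ (b * c) • (qU q ^ c * qV q ^ b) := by
  induction c with
  | zero => simp
  | succ c ih =>
    rw [pow_succ, ← mul_assoc, ih, smul_mul_assoc, mul_assoc, Vpow_U q hq0,
      mul_smul_comm, smul_smul, ← mul_assoc, ← pow_succ, ← pow_add]
    ring_nf

end Lemmas

lemma adjoin_UV_top (q : ℂ) : Algebra.adjoin ℂ {qU q, qV q} = ⊤ := by
  have h1 : Algebra.adjoin ℂ (Set.range (FreeAlgebra.ι ℂ : Fin 2 → FreeAlgebra ℂ (Fin 2))) = ⊤ :=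
    FreeAlgebra.adjoin_range_ι ℂ (Fin 2)
  have h2 := AlgHom.map_adjoin (RingQuot.mkAlgHom ℂ (PlaneRel q))
    (Set.range (FreeAlgebra.ι ℂ : Fin 2 → FreeAlgebra ℂ (Fin 2)))
  rw [h1, Algebra.map_top, (AlgHom.range_eq_top _).mpr (RingQuot.mkAlgHom_surjective ℂ _)] at h2
  rw [h2]
  congr 1
  rw [← Set.range_comp]
  ext x
  constructor
  · rintro (rfl | rfl)
    · exact ⟨0, rfl⟩
    · exact ⟨1, rfl⟩
  · rintro ⟨i, rfl⟩
    fin_cases i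
    · left; rfl
    · right; rfl

/-- The monomial family in the quantum plane. -/
noncomputable def qMono (q : ℂ) (p : ℕ × ℕ) : QuantumPlane q := qU q ^ p.1 * qV q ^ p.2

lemma qMono_mul (q : ℂ) (hq0 : q ≠ 0) (p p' : ℕ × ℕ) :
    qMono q p * qMono q p' = (q⁻¹) ^ (p.2 * p'.1) • qMono q (p.1 + p'.1, p.2 + p'.2) := by
  unfold qMono
  calc qU q ^ p.1 * qV q ^ p.2 * (qU q ^ p'.1 * qV q ^ p'.2)
      = qU q ^ p.1 * (qV q ^ p.2 * qU q ^ p'.1) * qV q ^ p'.2 := by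
        simp only [mul_assoc]
    _ = (q⁻¹) ^ (p.2 * p'.1) • (qU q ^ (p.1 + p'.1) * qV q ^ (p.2 + p'.2)) := by
        rw [Vpow_Upow q hq0, mul_smul_comm, smul_mul_assoc, pow_add, pow_add]
        simp only [mul_assoc]

noncomputable def MonoSpan (q : ℂ) : Submodule ℂ (QuantumPlane q) :=
  Submodule.span ℂ (Set.range (qMono q))

lemma mem_MonoSpan (q : ℂ) (x : QuantumPlane q) :
    x ∈ MonoSpan q ↔ x ∈ Submodule.span ℂ (Set.range (qMono q)) := Iff.rfl

lemma qMono_mem (q : ℂ) (p : ℕ × ℕ) : qMono q p ∈ MonoSpan q :=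
  Submodule.subset_span ⟨p, rfl⟩

lemma one_mem_MonoSpan (q : ℂ) : (1 : QuantumPlane q) ∈ MonoSpan q := by
  simpa [qMono] using qMono_mem q (0, 0)

lemma mul_mem_MonoSpan (q : ℂ) (hq0 : q ≠ 0) {x y : QuantumPlane q}
    (hx : x ∈ MonoSpan q) (hy : y ∈ MonoSpan q) : x * y ∈ MonoSpan q := by
  rw [mem_MonoSpan] at hx
  induction hx using Submodule.span_induction with
  | mem x hx =>
    obtain ⟨p, rfl⟩ := hx
    rw [mem_MonoSpan] at hy
    induction hy using Submodule.span_induction with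
    | mem y hy =>
      obtain ⟨p', rfl⟩ := hy
      rw [qMono_mul q hq0]
      exact (MonoSpan q).smul_mem _ (qMono_mem q _)
    | zero => rw [mul_zero]; exact (MonoSpan q).zero_mem
    | add y z _ _ hy hz => rw [mul_add]; exact (MonoSpan q).add_mem hy hz
    | smul a y _ hy => rw [mul_smul_comm]; exact (MonoSpan q).smul_mem _ hy
  | zero => rw [zero_mul]; exact (MonoSpan q).zero_mem
  | add x x' _ _ h h' => rw [add_mul]; exact (MonoSpan q).add_mem h h'
  | smul a x _ h => rw [smul_mul_assoc]; exact (MonoSpan q).smul_mem _ h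

lemma span_mono_top (q : ℂ) (hq0 : q ≠ 0) : MonoSpan q = ⊤ := by
  refine top_unique fun x _ => ?_
  obtain ⟨y, rfl⟩ := RingQuot.mkAlgHom_surjective ℂ (PlaneRel q) x
  induction y using FreeAlgebra.induction with
  | grade0 c =>
    rw [AlgHom.commutes]
    simpa [Algebra.algebraMap_eq_smul_one] using (MonoSpan q).smul_mem c (one_mem_MonoSpan q)
  | grade1 i =>
    fin_cases i
    · simpa [qMono, qU, freeGen2] using qMono_mem q (1, 0)
    · simpa [qMono, qV, freeGen2] using qMono_mem q (0, 1)
  | mul a b ha hb => rw [map_mul]; exact mul_mem_MonoSpan q hq0 (ha trivial) (hb trivial)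
  | add a b ha hb => rw [map_add]; exact (MonoSpan q).add_mem (ha trivial) (hb trivial)

/-- The underlying module of the basis model: finitely supported functions on `ℕ × ℕ`. -/
abbrev QPMod : Type := (ℕ × ℕ) →₀ ℂ

/-- Action of `u` on the model. -/
noncomputable def Uop : QPMod →ₗ[ℂ] QPMod := Finsupp.lmapDomain ℂ ℂ (fun p => (p.1 + 1, p.2))

/-- Action of `v` on the model. -/
noncomputable def Vop (q : ℂ) : QPMod →ₗ[ℂ] QPMod :=
  Finsupp.lsum ℂ (fun p => (q⁻¹) ^ p.1 • Finsupp.lsingle (p.1, p.2 + 1))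

lemma Uop_single (p : ℕ × ℕ) (c : ℂ) :
    Uop (Finsupp.single p c) = Finsupp.single (p.1 + 1, p.2) c := by
  simp [Uop, Finsupp.mapDomain_single]

lemma Vop_single (q : ℂ) (p : ℕ × ℕ) (c : ℂ) :
    Vop q (Finsupp.single p c) = (q⁻¹) ^ p.1 • Finsupp.single (p.1, p.2 + 1) c := by
  simp [Vop]

lemma UV_End_rel (q : ℂ) (hq0 : q ≠ 0) :
    Uop * Vop q = q • (Vop q * Uop) := by
  apply Finsupp.lhom_ext
  intro p c
  simp only [Module.End.mul_apply, LinearMap.smul_apply, Uop_single, Vop_single, map_smul]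
  simp only [smul_smul]
  congr 1
  rw [pow_succ]
  field_simp

/-- The representation of the quantum plane on `QPMod`. -/
noncomputable def rep (q : ℂ) (hq0 : q ≠ 0) : QuantumPlane q →ₐ[ℂ] Module.End ℂ QPMod :=
  RingQuot.liftAlgHom ℂ ⟨FreeAlgebra.lift ℂ ![Uop, Vop q], by
    rintro x y ⟨⟩
    simp only [map_mul, map_smul, freeGen2, FreeAlgebra.lift_ι_apply]
    exact UV_End_rel q hq0⟩

lemma rep_U (q : ℂ) (hq0 : q ≠ 0) : rep q hq0 (qU q) = Uop := by
  rw [qU, rep, RingQuot.liftAlgHom_mkAlgHom_apply, freeGen2, FreeAlgebra.lift_ι_apply]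
  rfl

lemma rep_V (q : ℂ) (hq0 : q ≠ 0) : rep q hq0 (qV q) = Vop q := by
  rw [qV, rep, RingQuot.liftAlgHom_mkAlgHom_apply, freeGen2, FreeAlgebra.lift_ι_apply]
  rfl

/-- Evaluation of the representation at the vacuum vector. -/
noncomputable def toM (q : ℂ) (hq0 : q ≠ 0) : QuantumPlane q →ₗ[ℂ] QPMod where
  toFun z := rep q hq0 z (Finsupp.single (0, 0) 1)
  map_add' x y := by simp [map_add]
  map_smul' a x := by simp [map_smul]

/-- The straightening map sending `single (a,b) c` to `c • uᵃvᵇ`. -/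
noncomputable def ofM (q : ℂ) : QPMod →ₗ[ℂ] QuantumPlane q :=
  Finsupp.lsum ℂ (fun p => LinearMap.toSpanSingleton ℂ _ (qMono q p))

lemma ofM_single (q : ℂ) (p : ℕ × ℕ) (c : ℂ) :
    ofM q (Finsupp.single p c) = c • qMono q p := by
  simp [ofM, LinearMap.toSpanSingleton_apply]

lemma ofM_apply (q : ℂ) (m : QPMod) :
    ofM q m = m.sum fun p r => r • qMono q p := by
  simp [ofM, Finsupp.lsum_apply, Finsupp.sum, LinearMap.toSpanSingleton_apply]

lemma Uop_pow (a : ℕ) (p : ℕ × ℕ) (c : ℂ) :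
    (Uop ^ a) (Finsupp.single p c) = Finsupp.single (p.1 + a, p.2) c := by
  induction a with
  | zero => simp
  | succ a ih =>
    rw [pow_succ', Module.End.mul_apply, ih, Uop_single]
    congr 1

lemma Vop_pow_vac (q : ℂ) (b : ℕ) :
    (Vop q ^ b) (Finsupp.single ((0 : ℕ), (0 : ℕ)) (1 : ℂ)) = Finsupp.single (0, b) 1 := by
  induction b with
  | zero => simp
  | succ b ih =>
    rw [pow_succ', Module.End.mul_apply, ih, Vop_single]
    simp

lemma toM_mono (q : ℂ) (hq0 : q ≠ 0) (p : ℕ × ℕ) :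
    toM q hq0 (qMono q p) = Finsupp.single p 1 := by
  show rep q hq0 (qMono q p) (Finsupp.single (0, 0) 1) = _
  rw [qMono, map_mul, map_pow, map_pow, rep_U, rep_V, Module.End.mul_apply, Vop_pow_vac, Uop_pow]
  simp

lemma toM_ofM (q : ℂ) (hq0 : q ≠ 0) (m : QPMod) : toM q hq0 (ofM q m) = m := by
  induction m using Finsupp.induction_linear with
  | zero => simp
  | add f g hf hg => rw [map_add, map_add, hf, hg]
  | single p c =>
    rw [ofM_single, map_smul, toM_mono]
    simp [Finsupp.smul_single]

lemma ofM_surjective (q : ℂ) (hq0 : q ≠ 0) : Function.Surjective (ofM q) := by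
  rw [← LinearMap.range_eq_top]
  refine top_unique ?_
  rw [← span_mono_top q hq0, MonoSpan]
  rw [Submodule.span_le]
  rintro x ⟨p, rfl⟩
  exact ⟨Finsupp.single p 1, by simp [ofM_single]⟩

lemma ofM_toM (q : ℂ) (hq0 : q ≠ 0) (z : QuantumPlane q) : ofM q (toM q hq0 z) = z := by
  obtain ⟨m, rfl⟩ := ofM_surjective q hq0 z
  rw [toM_ofM]

lemma eval_sum (c : QPMod) (f : ℕ × ℕ → ℕ × ℕ) (hf : Function.Injective f)
    (s : ℕ × ℕ → ℂ) (p₀ : ℕ × ℕ) :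
    (c.sum fun p r => Finsupp.single (f p) (s p * r)) (f p₀) = s p₀ * c p₀ := by
  rw [Finsupp.sum_apply, Finsupp.sum_eq_single p₀]
  · rw [Finsupp.single_eq_same]
  · intro b _ hb
    exact Finsupp.single_eq_of_ne' (fun h => hb (hf h))
  · intro h
    simp

lemma qMono_U (q : ℂ) : qMono q (1, 0) = qU q := by simp [qMono]

lemma qMono_V (q : ℂ) : qMono q (0, 1) = qV q := by simp [qMono]

lemma toM_mulU (q : ℂ) (hq0 : q ≠ 0) (c : QPMod) :
    toM q hq0 (ofM q c * qU q)
      = c.sum fun p r => Finsupp.single (p.1 + 1, p.2) ((q⁻¹) ^ p.2 * r) := by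
  rw [ofM_apply, Finsupp.sum_mul, map_finsuppSum]
  apply Finsupp.sum_congr
  intro p _
  rw [smul_mul_assoc, ← qMono_U q, qMono_mul q hq0, map_smul, map_smul, toM_mono]
  simp [Finsupp.smul_single, smul_smul, mul_comm]

lemma toM_mulV (q : ℂ) (hq0 : q ≠ 0) (c : QPMod) :
    toM q hq0 (ofM q c * qV q)
      = c.sum fun p r => Finsupp.single (p.1, p.2 + 1) r := by
  rw [ofM_apply, Finsupp.sum_mul, map_finsuppSum]
  apply Finsupp.sum_congr
  intro p _
  rw [smul_mul_assoc, ← qMono_V q, qMono_mul q hq0, map_smul, map_smul, toM_mono]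
  simp [Finsupp.smul_single, smul_smul]

lemma toM_U_mul (q : ℂ) (hq0 : q ≠ 0) (z : QuantumPlane q) :
    toM q hq0 (qU q * z) = Uop (toM q hq0 z) := by
  show rep q hq0 (qU q * z) _ = Uop (rep q hq0 z _)
  rw [map_mul, Module.End.mul_apply, rep_U]

lemma toM_V_mul (q : ℂ) (hq0 : q ≠ 0) (z : QuantumPlane q) :
    toM q hq0 (qV q * z) = Vop q (toM q hq0 z) := by
  show rep q hq0 (qV q * z) _ = Vop q (rep q hq0 z _)
  rw [map_mul, Module.End.mul_apply, rep_V]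

lemma shiftU_inj : Function.Injective (fun p : ℕ × ℕ => (p.1 + 1, p.2)) := by
  intro a b h
  simp only [Prod.mk.injEq, add_left_inj] at h
  exact Prod.ext h.1 h.2

lemma shiftV_inj : Function.Injective (fun p : ℕ × ℕ => (p.1, p.2 + 1)) := by
  intro a b h
  simp only [Prod.mk.injEq, add_left_inj] at h
  exact Prod.ext h.1 h.2

lemma Uop_coeff (m : QPMod) (p₀ : ℕ × ℕ) : Uop m (p₀.1 + 1, p₀.2) = m p₀ := by
  have := Finsupp.mapDomain_apply shiftU_inj m p₀
  simpa [Uop, Finsupp.lmapDomain_apply] using this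

lemma Vop_sum (q : ℂ) (m : QPMod) :
    Vop q m = m.sum fun p r => Finsupp.single (p.1, p.2 + 1) ((q⁻¹) ^ p.1 * r) := by
  rw [Vop, Finsupp.lsum_apply]
  apply Finsupp.sum_congr
  intro p _
  simp [Finsupp.smul_single']

lemma eval_sum_one (c : QPMod) (f : ℕ × ℕ → ℕ × ℕ) (hf : Function.Injective f) (p₀ : ℕ × ℕ) :
    (c.sum fun p r => Finsupp.single (f p) r) (f p₀) = c p₀ := by
  have h := eval_sum c f hf (fun _ => 1) p₀
  simp only [one_mul] at h
  exact h

lemma central_coeff_dvd (n : ℕ) (q : ℂ) (hq : IsPrimitiveRoot q n) (hq0 : q ≠ 0)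
    (z : QuantumPlane q) (hz : z ∈ Subalgebra.center ℂ (QuantumPlane q)) (p₀ : ℕ × ℕ)
    (h : toM q hq0 z p₀ ≠ 0) : n ∣ p₀.1 ∧ n ∣ p₀.2 := by
  have hcomm := Subalgebra.mem_center_iff.mp hz
  set c := toM q hq0 z with hc
  have hzc : ofM q c = z := ofM_toM q hq0 z
  have hqinv : ∀ m : ℕ, (q⁻¹) ^ m = 1 → n ∣ m := by
    intro m hm
    apply hq.dvd_of_pow_eq_one
    rw [inv_pow] at hm
    exact inv_eq_one.mp hm
  constructor
  · -- from commuting with V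
    have hV := hcomm (qV q)
    have h1 := congrArg (fun w => toM q hq0 w (p₀.1, p₀.2 + 1)) hV
    rw [toM_V_mul, ← hc, Vop_sum, eval_sum c _ shiftV_inj (fun p => (q⁻¹) ^ p.1) p₀,
      ← hzc, toM_mulV, eval_sum_one c _ shiftV_inj p₀] at h1
    apply hqinv
    have h2 : (q⁻¹) ^ p₀.1 * c p₀ = 1 * c p₀ := by rw [one_mul]; exact h1
    exact mul_right_cancel₀ h h2
  · -- from commuting with U
    have hU := hcomm (qU q)
    have h1 := congrArg (fun w => toM q hq0 w (p₀.1 + 1, p₀.2)) hU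
    rw [toM_U_mul, ← hc, Uop_coeff c p₀,
      ← hzc, toM_mulU, eval_sum c _ shiftU_inj (fun p => (q⁻¹) ^ p.2) p₀] at h1
    apply hqinv
    have h2 : (q⁻¹) ^ p₀.2 * c p₀ = 1 * c p₀ := by rw [one_mul]; exact h1.symm
    exact mul_right_cancel₀ h h2

lemma Un_central (n : ℕ) (q : ℂ) (hqn : q ^ n = 1) :
    qU q ^ n ∈ Subalgebra.center ℂ (QuantumPlane q) := by
  refine Subalgebra.mem_center_iff.mpr fun b => ?_
  obtain ⟨y, rfl⟩ := RingQuot.mkAlgHom_surjective ℂ (PlaneRel q) b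
  induction y using FreeAlgebra.induction with
  | grade0 c => rw [AlgHom.commutes]; exact Algebra.commutes c _
  | grade1 i =>
    fin_cases i
    · show qU q * qU q ^ n = qU q ^ n * qU q
      rw [← pow_succ, ← pow_succ']
    · show qV q * qU q ^ n = qU q ^ n * qV q
      rw [Upow_V, hqn, one_smul]
  | mul a b ha hb => rw [map_mul, mul_assoc, hb, ← mul_assoc, ha, mul_assoc]
  | add a b ha hb => rw [map_add, add_mul, mul_add, ha, hb]

lemma Vn_central (n : ℕ) (q : ℂ) (hqn : q ^ n = 1) :
    qV q ^ n ∈ Subalgebra.center ℂ (QuantumPlane q) := by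
  refine Subalgebra.mem_center_iff.mpr fun b => ?_
  obtain ⟨y, rfl⟩ := RingQuot.mkAlgHom_surjective ℂ (PlaneRel q) b
  induction y using FreeAlgebra.induction with
  | grade0 c => rw [AlgHom.commutes]; exact Algebra.commutes c _
  | grade1 i =>
    fin_cases i
    · show qU q * qV q ^ n = qV q ^ n * qU q
      rw [U_Vpow, hqn, one_smul]
    · show qV q * qV q ^ n = qV q ^ n * qV q
      rw [← pow_succ, ← pow_succ']
  | mul a b ha hb => rw [map_mul, mul_assoc, hb, ← mul_assoc, ha, mul_assoc]
  | add a b ha hb => rw [map_add, add_mul, mul_add, ha, hb]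

/-- for `n > 1` and `q` a primitive `n`-th root of unity, the center of the
quantum plane `ℂ_q[u,v]` is the subalgebra generated by the images of `uⁿ` and `vⁿ`. -/
theorem quantum_plane_center (n : ℕ) (hn : 1 < n) (q : ℂ) (hq : IsPrimitiveRoot q n) :
    Subalgebra.center ℂ (QuantumPlane q) = Algebra.adjoin ℂ {qU q ^ n, qV q ^ n} := by
  have hq0 : q ≠ 0 := by
    intro h
    have h1 := hq.pow_eq_one
    rw [h, zero_pow (by omega : n ≠ 0)] at h1
    exact zero_ne_one h1
  apply le_antisymm
  · intro z hz
    have hzc : ofM q (toM q hq0 z) = z := ofM_toM q hq0 z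
    rw [← hzc, ofM_apply, Finsupp.sum]
    apply Subalgebra.sum_mem
    intro p hp
    apply Subalgebra.smul_mem
    obtain ⟨hd1, hd2⟩ := central_coeff_dvd n q hq hq0 z hz p (Finsupp.mem_support_iff.mp hp)
    obtain ⟨k, hk⟩ := hd1
    obtain ⟨l, hl⟩ := hd2
    have hm : qMono q p = (qU q ^ n) ^ k * (qV q ^ n) ^ l := by
      rw [qMono, hk, hl, pow_mul, pow_mul]
    rw [hm]
    have h1 : qU q ^ n ∈ Algebra.adjoin ℂ {qU q ^ n, qV q ^ n} :=
      Algebra.subset_adjoin (Set.mem_insert _ _)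
    have h2 : qV q ^ n ∈ Algebra.adjoin ℂ {qU q ^ n, qV q ^ n} :=
      Algebra.subset_adjoin (Set.mem_insert_of_mem _ rfl)
    exact mul_mem (pow_mem h1 k) (pow_mem h2 l)
  · apply Algebra.adjoin_le
    rintro x (rfl | rfl)
    · exact Un_central n q hq.pow_eq_one
    · exact Vn_central n q hq.pow_eq_one
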